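/- Every finite simple graph G embeds as an induced subgraph into a finite simple graph H such that every partial isomorphism of G extends to an automorphism of H. Precisely: for every simple graph G on a finite vertex set V there exist a finite simple graph H on a vertex set W and a graph embedding f : G ↪ H (injective on vertices, with u and v adjacent in G if and only if f(u) and f(v) are adjacent in H) such that for every subset A ⊆ V and every injective map p : A → V satisfying (a adjacent to b in G if and only if p(a) adjacent to p(b) in G, for all a, b ∈ A), there exists a graph automorphism j of H with j (f a) = f (p a) for all a ∈ A. -/

import Mathlib

open Classical in
private lemma hrushovski_extend_perm {V : Type} [Finite V] {A : Set V} (p : V → V)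
    (hp : Set.InjOn p A) : ∃ σ : Equiv.Perm V, ∀ a ∈ A, σ a = p a := by
  have : Fintype V := Fintype.ofFinite V
  let q : A → (p '' A) := fun x => ⟨p x, ⟨x, x.2, rfl⟩⟩
  have hqbij : Function.Bijective q := by
    constructor
    · rintro ⟨a, ha⟩ ⟨b, hb⟩ h
      exact Subtype.ext (hp ha hb (by simpa [q, Subtype.ext_iff] using h))
    · rintro ⟨y, hy⟩
      obtain ⟨a, ha, rfl⟩ := hy
      exact ⟨⟨a, ha⟩, rfl⟩
  let e1 : A ≃ (p '' A) := Equiv.ofBijective q hqbij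
  have h1 : Fintype.card A = Fintype.card (p '' A) := Fintype.card_congr e1
  have hcard : Fintype.card (↥(Aᶜ)) = Fintype.card (↥((p '' A)ᶜ)) := by
    rw [Fintype.card_compl_set, Fintype.card_compl_set, h1]
  let e2 : ↥(Aᶜ) ≃ ↥((p '' A)ᶜ) := Fintype.equivOfCardEq hcard
  refine ⟨(Equiv.Set.sumCompl A).symm.trans ((e1.sumCongr e2).trans
      (Equiv.Set.sumCompl (p '' A))), fun a ha => ?_⟩
  have h2 : (Equiv.Set.sumCompl A).symm a = Sum.inl ⟨a, ha⟩ :=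
    Equiv.Set.sumCompl_symm_apply (x := ⟨a, ha⟩)
  simp [h2, e1, q]

open Classical in
/-- **Hrushovski's theorem.** Every finite simple graph `G` embeds as an induced subgraph
into a finite simple graph `H` such that every partial isomorphism of `G` extends to an
automorphism of `H`. -/
theorem hrushovski {V : Type} [Finite V] (G : SimpleGraph V) :
    ∃ (W : Type) (_ : Finite W) (H : SimpleGraph W) (f : V → W),
      Function.Injective f ∧
      (∀ u v : V, G.Adj u v ↔ H.Adj (f u) (f v)) ∧
      ∀ (A : Set V) (p : V → V),
        Set.InjOn p A →
        (∀ a ∈ A, ∀ b ∈ A, (G.Adj a b ↔ G.Adj (p a) (p b))) →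
        ∃ j : H ≃g H, ∀ a ∈ A, j (f a) = f (p a) := by
  obtain ⟨ι, hι⟩ := exists_injective_nat V
  -- orientation of `G`
  set χ : V → V → Bool := fun u v => decide (G.Adj u v ∧ ι u < ι v) with hχ
  have key : ∀ u v : V, u ≠ v → ((χ u v ≠ χ v u) ↔ G.Adj u v) := by
    intro u v huv
    rcases lt_trichotomy (ι u) (ι v) with h | h | h
    · have h' : ¬ ι v < ι u := by omega
      simp [hχ, h, h', G.adj_comm v u]
    · exact absurd (hι h) huv
    · have h' : ¬ ι u < ι v := by omega
      simp [hχ, h, h', G.adj_comm v u]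
  have χself : ∀ u : V, χ u u = false := by simp [hχ]
  refine ⟨V × (V → Bool), inferInstance,
    { Adj := fun x y => x.1 ≠ y.1 ∧ x.2 y.1 ≠ y.2 x.1
      symm := ⟨by rintro ⟨u, f⟩ ⟨v, g⟩ ⟨h1, h2⟩; exact ⟨h1.symm, h2.symm⟩⟩
      loopless := ⟨by rintro ⟨u, f⟩ ⟨h1, h2⟩; exact h1 rfl⟩ },
    fun u => (u, χ u), fun u v h => congrArg Prod.fst h, ?_, ?_⟩
  · intro u v
    constructor
    · intro h
      exact ⟨h.ne, (key u v h.ne).2 h⟩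
    · rintro ⟨h1, h2⟩
      exact (key u v h1).1 h2
  · intro A p hinj hiso
    obtain ⟨σ, hσ⟩ := hrushovski_extend_perm p hinj
    set c : V → V → Bool := fun u v => xor (χ (σ u) (σ v)) (χ u v) with hc
    set t : V → V → Bool := fun u v =>
      if u ∈ A then c u v else if v ∈ A then c v u else false with ht
    have tsymm : ∀ u v : V, t u v = t v u := by
      intro u v
      rcases eq_or_ne u v with rfl | huv
      · rfl
      by_cases hu : u ∈ A <;> by_cases hv : v ∈ A <;> simp [ht, hu, hv]
      have h1 : (χ (σ u) (σ v) ≠ χ (σ v) (σ u)) ↔ (χ u v ≠ χ v u) := by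
        rw [key _ _ (fun h => huv (σ.injective h)), key _ _ huv,
          hσ u hu, hσ v hv]
        exact (hiso u hu v hv).symm
      revert h1
      simp only [hc]
      cases χ (σ u) (σ v) <;> cases χ (σ v) (σ u) <;>
        cases χ u v <;> cases χ v u <;> simp
    refine ⟨⟨⟨fun x => (σ x.1, fun w => xor (x.2 (σ.symm w)) (t x.1 (σ.symm w))),
        fun y => (σ.symm y.1, fun v => xor (y.2 (σ v)) (t (σ.symm y.1) v)),
        ?_, ?_⟩, ?_⟩, ?_⟩
    · rintro ⟨u, f⟩
      simp [Bool.xor_assoc]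
    · rintro ⟨w, g⟩
      simp [Bool.xor_assoc]
    · rintro ⟨u, f⟩ ⟨v, g⟩
      simp only [Equiv.coe_fn_mk, ne_eq, Equiv.symm_apply_apply, EmbeddingLike.apply_eq_iff_eq]
      constructor
      · rintro ⟨h1, h2⟩
        refine ⟨h1, ?_⟩
        rw [tsymm] at h2
        intro hfg
        exact h2 (by rw [hfg])
      · rintro ⟨h1, h2⟩
        refine ⟨h1, ?_⟩
        rw [tsymm]
        intro hfg
        apply h2
        cases hbt : t v u <;> revert hfg <;> simp [hbt]
    · intro a ha
      have hσa := hσ a ha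
      refine Prod.ext hσa ?_
      funext w
      show xor (χ a (σ.symm w)) (t a (σ.symm w)) = χ (p a) w
      simp only [ht, hc, ha, if_pos]
      rw [hσa]
      cases hb : χ a (σ.symm w) <;> simp [hb, Equiv.apply_symm_apply]
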